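/- For every integer K ≥ 2 and every p ∈ [0,1], there exists a pair (p†, q†) ∈ G_K with q† ≤ p ≤ p† and p† − q† = 1/(K − 1) such that for all s, b ∈ [0,1]: GFT(p†,q†,s,b) ≥ GFT(p,p,s,b) − 1/(K − 1) and Rev(p†,q†,s,b) ≥ −1/(K − 1). -/

import Mathlib

/-- Gain from trade. -/
noncomputable def GFT (p q s b : ℝ) : ℝ := (b - s) * (if s ≤ p ∧ q ≤ b then 1 else 0)

/-- Revenue. -/
noncomputable def Rev (p q s b : ℝ) : ℝ := (q - p) * (if s ≤ p ∧ q ≤ b then 1 else 0)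

/-- The uniform grid `G_K = {(i/(K-1), j/(K-1)) : i, j ∈ {0,…,K-1}}`. -/
def grid (K : ℕ) : Set (ℝ × ℝ) :=
  {x | ∃ i j : ℕ, i < K ∧ j < K ∧ x.1 = (i : ℝ) / ((K : ℝ) - 1) ∧ x.2 = (j : ℝ) / ((K : ℝ) - 1)}

theorem stmt6 (K : ℕ) (hK : 2 ≤ K) (p : ℝ) (hp : p ∈ Set.Icc (0:ℝ) 1) :
    ∃ pd qd : ℝ, (pd, qd) ∈ grid K ∧ qd ≤ p ∧ p ≤ pd ∧ pd - qd = 1 / ((K : ℝ) - 1) ∧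
      ∀ s b : ℝ, s ∈ Set.Icc (0:ℝ) 1 → b ∈ Set.Icc (0:ℝ) 1 →
        GFT pd qd s b ≥ GFT p p s b - 1 / ((K : ℝ) - 1) ∧
        Rev pd qd s b ≥ -(1 / ((K : ℝ) - 1)) := by
  obtain ⟨hp0, hp1⟩ := hp
  set n : ℝ := (K : ℝ) - 1 with hn
  have hK1 : (1:ℝ) ≤ (K:ℝ) - 1 := by
    have : (2:ℝ) ≤ (K:ℝ) := by exact_mod_cast hK
    linarith
  have hnpos : 0 < n := by simp only [hn]; linarith
  set j : ℕ := min (Nat.floor (p * n)) (K - 2) with hj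
  have hjle : (j : ℝ) ≤ p * n := by
    have h1 : (j : ℕ) ≤ Nat.floor (p * n) := min_le_left _ _
    have h2 : (Nat.floor (p * n) : ℝ) ≤ p * n :=
      Nat.floor_le (by positivity)
    calc (j:ℝ) ≤ (Nat.floor (p * n) : ℝ) := by exact_mod_cast h1
      _ ≤ p * n := h2
  have hjK2 : j ≤ K - 2 := min_le_right _ _
  have hj1K : j + 1 < K := by omega
  have hjK2cast : (j : ℝ) + 1 ≤ n := by
    have : (j:ℕ) + 1 ≤ K - 1 := by omega
    have h : ((j:ℕ) + 1 : ℝ) ≤ ((K - 1 : ℕ) : ℝ) := by exact_mod_cast this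
    have hc : ((K - 1 : ℕ) : ℝ) = (K:ℝ) - 1 := by
      have : 1 ≤ K := by omega
      push_cast [this]; ring
    push_cast at h ⊢
    rw [hc] at h; exact h
  have hple : p * n ≤ (j : ℝ) + 1 := by
    rcases le_or_gt (Nat.floor (p * n)) (K - 2) with h | h
    · have hje : j = Nat.floor (p * n) := min_eq_left h
      have := Nat.lt_floor_add_one (p * n)
      rw [hje]
      push_cast
      linarith [Nat.lt_floor_add_one (p * n)]
    · have hje : j = K - 2 := min_eq_right (le_of_lt h)
      have hcast : (j : ℝ) = (K:ℝ) - 2 := by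
        rw [hje]
        have h2 : (2:ℕ) ≤ K := hK
        push_cast [h2]; ring
      have : p * n ≤ n := by nlinarith
      rw [hcast]; simp only [hn] at *; linarith
  refine ⟨((j:ℝ) + 1) / n, (j:ℝ) / n, ⟨j + 1, j, hj1K, by omega, by push_cast; rfl, rfl⟩,
    ?_, ?_, ?_, ?_⟩
  · rw [div_le_iff₀ hnpos]; linarith
  · rw [le_div_iff₀ hnpos]; linarith
  · field_simp; ring
  · intro s b hs hb
    have hqp : (j:ℝ)/n ≤ p := by rw [div_le_iff₀ hnpos]; linarith
    have hpp : p ≤ ((j:ℝ)+1)/n := by rw [le_div_iff₀ hnpos]; linarith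
    have hinv : 0 < 1 / n := by positivity
    constructor
    · unfold GFT
      by_cases htr : s ≤ p ∧ p ≤ b
      · have h1 : s ≤ ((j:ℝ)+1)/n := le_trans htr.1 hpp
        have h2 : (j:ℝ)/n ≤ b := le_trans hqp htr.2
        rw [if_pos htr, if_pos ⟨h1, h2⟩]
        simp only [hn]; linarith
      · rw [if_neg htr]
        by_cases htr2 : s ≤ ((j:ℝ)+1)/n ∧ (j:ℝ)/n ≤ b
        · rw [if_pos htr2]
          have : b - s ≥ (j:ℝ)/n - ((j:ℝ)+1)/n := by linarith [htr2.1, htr2.2]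
          have heq : (j:ℝ)/n - ((j:ℝ)+1)/n = -(1/n) := by field_simp; ring
          simp only [hn] at *
          linarith
        · rw [if_neg htr2]; simp only [hn]; linarith
    · unfold Rev
      by_cases htr2 : s ≤ ((j:ℝ)+1)/n ∧ (j:ℝ)/n ≤ b
      · rw [if_pos htr2]
        have heq : ((j:ℝ)/n - ((j:ℝ)+1)/n) * 1 = -(1/n) := by field_simp; ring
        simp only [hn] at *
        linarith
      · rw [if_neg htr2]; simp only [hn]; linarith
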